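/- The thresholding operator S of the logdet proximal map shrinks smaller inputs more: for x ≥ y ≥ 0 with both nonzero outputs, the shrinkage amount x − S(x) is at most y − S(y). Concretely, the map x ↦ x − (c₁ + sqrt(c₂))/2, where c₁ = x − ε and c₂ = (x−ε)² − 4(β/η − εx), is nonincreasing on the region where c₂ > 0 and x ≥ ε. -/
import Mathlib


/-- The logdet thresholding operator shrinks smaller inputs more: the shrinkage
amount `D(x) = x - S(x)`, where `S(x) = ((x - ε) + √c₂(x))/2` with
`c₂(x) = (x - ε)² - 4(t - εx)` and `t = β/η`, is nonincreasing on the region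
`{x | c₂(x) > 0 ∧ x ≥ ε}`. -/
theorem logdet_shrinkage_antitone (β η ε : ℝ) (hβ : 0 < β) (hη : 0 < η)
    (hε : 0 < ε) :
    AntitoneOn
      (fun x : ℝ => x -
        ((x - ε) + Real.sqrt ((x - ε) ^ 2 - 4 * (β / η - ε * x))) / 2)
      {x : ℝ | 0 < (x - ε) ^ 2 - 4 * (β / η - ε * x) ∧ ε ≤ x} := by
  intro a ha b hb hab
  obtain ⟨hca, hεa⟩ := ha
  obtain ⟨hcb, hεb⟩ := hb
  have ht0 : 0 < β / η := div_pos hβ hη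
  set sa := Real.sqrt ((a - ε) ^ 2 - 4 * (β / η - ε * a)) with hsa
  set sb := Real.sqrt ((b - ε) ^ 2 - 4 * (β / η - ε * b)) with hsb
  have hsa2 : sa ^ 2 = (a - ε) ^ 2 - 4 * (β / η - ε * a) :=
    Real.sq_sqrt hca.le
  have hsb2 : sb ^ 2 = (b - ε) ^ 2 - 4 * (β / η - ε * b) :=
    Real.sq_sqrt hcb.le
  have hsa0 : 0 ≤ sa := Real.sqrt_nonneg _
  have hsb0 : 0 < sb := Real.sqrt_pos.mpr hcb
  -- sa ≤ a + ε since c₂(a) = (a+ε)² − 4t ≤ (a+ε)²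
  have hsa_le : sa ≤ a + ε := by
    rw [hsa]
    calc Real.sqrt ((a - ε) ^ 2 - 4 * (β / η - ε * a))
        ≤ Real.sqrt ((a + ε) ^ 2) := by
          apply Real.sqrt_le_sqrt; nlinarith
      _ = a + ε := by
          rw [Real.sqrt_sq (by nlinarith)]
  simp only
  nlinarith [mul_nonneg hsa0 hsb0.le, sq_nonneg (sb - sa), mul_le_mul_of_nonneg_left hsa_le (sub_nonneg.mpr hab)]
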